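/- Let M and M' be R-modules and f : M → M' a surjective R-module homomorphism. If N is a weakly classical 1-absorbing prime submodule of M with Ker(f) ⊆ N, then f(N) is a weakly classical 1-absorbing prime submodule of M'. -/
import Mathlib

/-- A proper submodule `N` of `M` is weakly classical 1-absorbing prime if whenever
`abcm ∈ N` and `abcm ≠ 0` for nonunits `a, b, c ∈ R` and `m ∈ M`, then `abm ∈ N` or `cm ∈ N`. -/
def IsWeaklyClassical1AbsorbingPrime {R : Type*} [CommRing R] {M : Type*} [AddCommGroup M]
    [Module R M] (N : Submodule R M) : Prop :=
  N ≠ ⊤ ∧ ∀ a b c : R, ∀ m : M, ¬ IsUnit a → ¬ IsUnit b → ¬ IsUnit c →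
    (a * b * c) • m ∈ N → (a * b * c) • m ≠ 0 → ((a * b) • m ∈ N ∨ c • m ∈ N)

/-- A proper ideal `I` of `R` is weakly 1-absorbing prime if whenever `abc ∈ I` and
`abc ≠ 0` for nonunits `a, b, c ∈ R`, then `ab ∈ I` or `c ∈ I`. -/
def IsWeakly1AbsorbingPrimeIdeal {R : Type*} [CommRing R] (I : Ideal R) : Prop :=
  I ≠ ⊤ ∧ ∀ a b c : R, ¬ IsUnit a → ¬ IsUnit b → ¬ IsUnit c →
    a * b * c ∈ I → a * b * c ≠ 0 → (a * b ∈ I ∨ c ∈ I)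

/-- If `f : M → M'` is a surjective `R`-homomorphism and `N` is a weakly
classical 1-absorbing prime submodule of `M` containing `Ker f`, then `f(N)` is a weakly
classical 1-absorbing prime submodule of `M'`. -/
theorem stmt_4 {R : Type*} [CommRing R] [Nontrivial R] {M M' : Type*} [AddCommGroup M]
    [Module R M] [Nontrivial M] [AddCommGroup M'] [Module R M'] [Nontrivial M']
    (f : M →ₗ[R] M') (hf : Function.Surjective f) (N : Submodule R M)
    (hN : IsWeaklyClassical1AbsorbingPrime N) (hker : LinearMap.ker f ≤ N) :
    IsWeaklyClassical1AbsorbingPrime (Submodule.map f N) := by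
  obtain ⟨hNtop, hNabs⟩ := hN
  have hcomap : Submodule.comap f (Submodule.map f N) = N := by
    rw [Submodule.comap_map_eq, sup_eq_left.mpr hker]
  constructor
  · intro h
    apply hNtop
    rw [← hcomap, h, Submodule.comap_top]
  · intro a b c m' ha hb hc hmem hne
    obtain ⟨m, rfl⟩ := hf m'
    have h1 : (a * b * c) • m ∈ N := by
      rw [← hcomap]
      simpa [Submodule.mem_comap, map_smul] using hmem
    have h2 : (a * b * c) • m ≠ 0 := by
      intro h
      apply hne
      rw [← map_smul, h, map_zero]
    rcases hNabs a b c m ha hb hc h1 h2 with h | h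
    · left
      rw [← map_smul]
      exact Submodule.mem_map_of_mem h
    · right
      rw [← map_smul]
      exact Submodule.mem_map_of_mem h
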